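/- If a directed graph G = (V, A) is strongly connected, S ⊆ V, and the induced subgraph on V\S is strongly connected, then for each weakly connected component S_i of the induced subgraph on S there exist an arc from V\S into S_i and an arc from S_i into V\S; consequently there exists a closed directed walk starting and ending at any fixed vertex of V\S that visits S_i and no other component of S. -/
import Mathlib

section Aux

variable {V A : Type} (tail head : A → V)

/-- `IsWalk tail head es x y`: the list of arcs `es` forms a directed walk
from `x` to `y`. -/
def IsWalk : List A → V → V → Prop
  | [], x, y => x = y
  | a :: es, x, y => tail a = x ∧ IsWalk es (head a) y

lemma isWalk_append {es fs : List A} {x y z : V}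
    (h1 : IsWalk tail head es x y) (h2 : IsWalk tail head fs y z) :
    IsWalk tail head (es ++ fs) x z := by
  induction es generalizing x with
  | nil =>
    have hxy : x = y := h1
    subst hxy; exact h2
  | cons a es ih => exact ⟨h1.1, ih h1.2⟩

lemma rtg_toWalk {r : V → V → Prop} {P : V → Prop} {x y : V}
    (h : Relation.ReflTransGen r x y)
    (hr : ∀ u v, r u v → ∃ a, tail a = u ∧ head a = v ∧ P v) :
    ∃ es : List A, IsWalk tail head es x y ∧ ∀ u ∈ es.map head, P u := by
  induction h with
  | refl => exact ⟨[], rfl, by simp⟩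
  | tail h1 h2 ih =>
    obtain ⟨es, hw, hP⟩ := ih
    obtain ⟨a, ha1, ha2, ha3⟩ := hr _ _ h2
    refine ⟨es ++ [a], isWalk_append _ _ hw ⟨ha1, ha2⟩, ?_⟩
    intro u hu
    simp only [List.map_append, List.map_cons, List.map_nil, List.mem_append,
      List.mem_cons, List.not_mem_nil, or_false] at hu
    rcases hu with hu | hu
    · exact hP u hu
    · rw [hu, ha2]; exact ha3

variable {S Si : Set V} (hSiS : Si ⊆ S)
variable (hSimax : ∀ x ∈ Si, ∀ y : V,
      ((∃ a, (tail a = x ∧ head a = y) ∨ (tail a = y ∧ head a = x)) ∧ x ∈ S ∧ y ∈ S)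
      → y ∈ Si)

include hSiS hSimax in
/-- along a walk from inside `Si` to outside `S` there is an arc leaving `Si`
directly into `Vᶜ S`. -/
lemma exit_arc : ∀ (es : List A) (x y : V), IsWalk tail head es x y → y ∉ S → x ∈ Si →
    ∃ a, tail a ∈ Si ∧ head a ∉ S := by
  intro es
  induction es with
  | nil =>
    intro x y hw hy hx
    exact absurd (hw ▸ hSiS hx) hy
  | cons a es ih =>
    intro x y hw hy hx
    by_cases hh : head a ∈ S
    · have hhead : head a ∈ Si :=
        hSimax x hx (head a) ⟨⟨a, Or.inl ⟨hw.1, rfl⟩⟩, hSiS hx, hh⟩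
      exact ih (head a) y hw.2 hy hhead
    · exact ⟨a, hw.1 ▸ hx, hh⟩

include hSiS hSimax in
/-- along a walk from outside `Si` to inside `Si` there is an arc entering `Si`
directly from outside `S`. -/
lemma entry_arc : ∀ (es : List A) (x y : V), IsWalk tail head es x y → y ∈ Si → x ∉ Si →
    ∃ a, tail a ∉ S ∧ head a ∈ Si := by
  intro es
  induction es with
  | nil =>
    intro x y hw hy hx
    exact absurd (hw ▸ hy) hx
  | cons a es ih =>
    intro x y hw hy hx
    by_cases hh : head a ∈ Si
    · refine ⟨a, fun hts => hx ?_, hh⟩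
      exact hw.1 ▸ hSimax (head a) hh (tail a) ⟨⟨a, Or.inr ⟨rfl, rfl⟩⟩, hSiS hh, hts⟩
    · exact ih (head a) y hw.2 hy hh

include hSiS hSimax in
/-- from a vertex of `Si`, one can walk to a vertex outside `S` meeting only
vertices of `Si` in between. -/
lemma exit_walk : ∀ (es : List A) (x y : V), IsWalk tail head es x y → y ∉ S → x ∈ Si →
    ∃ (fs : List A) (z : V), IsWalk tail head fs x z ∧ z ∉ S ∧
      ∀ u ∈ fs.map head, u ∈ Si ∨ u ∉ S := by
  intro es
  induction es with
  | nil =>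
    intro x y hw hy hx
    exact absurd (hw ▸ hSiS hx) hy
  | cons a es ih =>
    intro x y hw hy hx
    by_cases hh : head a ∈ S
    · have hhead : head a ∈ Si :=
        hSimax x hx (head a) ⟨⟨a, Or.inl ⟨hw.1, rfl⟩⟩, hSiS hx, hh⟩
      obtain ⟨fs, z, hfs, hz, hP⟩ := ih (head a) y hw.2 hy hhead
      refine ⟨a :: fs, z, ⟨hw.1, hfs⟩, hz, ?_⟩
      intro u hu
      simp only [List.map_cons, List.mem_cons] at hu
      rcases hu with hu | hu
      · exact Or.inl (hu ▸ hhead)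
      · exact hP u hu
    · refine ⟨[a], head a, ⟨hw.1, rfl⟩, hh, ?_⟩
      intro u hu
      simp only [List.map_cons, List.map_nil, List.mem_singleton] at hu
      exact Or.inr (hu ▸ hh)

/-- turn a list walk into a `Fin`-indexed walk. -/
lemma toFin : ∀ (es : List A) (x y : V), IsWalk tail head es x y →
    ∃ (w : Fin (es.length + 1) → V) (e : Fin es.length → A),
      (∀ j : Fin es.length, tail (e j) = w j.castSucc ∧ head (e j) = w j.succ) ∧
      w 0 = x ∧ w (Fin.last es.length) = y ∧
      (∀ j, w j = x ∨ w j ∈ es.map head) ∧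
      (∀ u ∈ es.map head, ∃ j, w j = u) := by
  intro es
  induction es with
  | nil =>
    intro x y hw
    have hxy : x = y := hw
    exact ⟨fun _ => x, Fin.elim0, fun j => j.elim0, rfl, hxy,
      fun j => Or.inl rfl, by simp⟩
  | cons a es ih =>
    intro x y hw
    obtain ⟨w', e', he', h0', hl', hmem', hsurj'⟩ := ih (head a) y hw.2
    refine ⟨Fin.cons x w', Fin.cons a e', ?_, rfl, ?_, ?_, ?_⟩
    · simp only [List.length_cons]
      intro j
      induction j using Fin.cases with
      | zero =>
        simp only [Fin.cons_zero, Fin.castSucc_zero, Fin.cons_succ]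
        exact ⟨hw.1, h0'.symm⟩
      | succ i =>
        rw [← Fin.succ_castSucc]
        simp only [Fin.cons_succ]
        exact he' i
    · simp only [List.length_cons]
      have h : Fin.last (es.length + 1) = (Fin.last es.length).succ := rfl
      rw [h, Fin.cons_succ]
      exact hl'
    · simp only [List.length_cons]
      intro j
      induction j using Fin.cases with
      | zero => exact Or.inl (Fin.cons_zero _ _)
      | succ i =>
        rw [List.map_cons, List.mem_cons]
        rcases hmem' i with h | h
        · exact Or.inr (Or.inl (by rw [Fin.cons_succ]; exact h))
        · exact Or.inr (Or.inr (by rw [Fin.cons_succ]; exact h))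
    · simp only [List.length_cons]
      intro u hu
      rw [List.map_cons, List.mem_cons] at hu
      rcases hu with hu | hu
      · refine ⟨Fin.succ 0, ?_⟩
        rw [Fin.cons_succ, h0', hu]
      · obtain ⟨j, hj⟩ := hsurj' u hu
        exact ⟨j.succ, by rw [Fin.cons_succ]; exact hj⟩

end Aux

/-- If `G` is strongly connected, `S ⊆ V` proper and nonempty with `G(V\S)`
strongly connected, then every weakly connected component `Si` of the induced
subgraph on `S` admits an arc entering it from `V\S` and an arc leaving it into
`V\S`; consequently, from every vertex `d ∉ S` there is a closed directed walk
visiting `Si` and meeting no other component of `S`. -/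
theorem component_entry_exit_and_walk
    {V A : Type} [Fintype V] [Fintype A]
    (tail head : A → V)
    (hstrong : ∀ u v : V, Relation.ReflTransGen
      (fun x y => ∃ a, tail a = x ∧ head a = y) u v)
    (S : Set V) (hne : S.Nonempty) (hproper : S ≠ Set.univ)
    (hVS : ∀ u ∉ S, ∀ v ∉ S, Relation.ReflTransGen
      (fun x y => ∃ a, tail a = x ∧ head a = y ∧ x ∉ S ∧ y ∉ S) u v)
    (Si : Set V) (hSiS : Si ⊆ S) (hSine : Si.Nonempty)
    (hSiconn : ∀ x ∈ Si, ∀ y ∈ Si, Relation.ReflTransGen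
      (fun x y => (∃ a, (tail a = x ∧ head a = y) ∨ (tail a = y ∧ head a = x))
        ∧ x ∈ S ∧ y ∈ S) x y)
    (hSimax : ∀ x ∈ Si, ∀ y : V,
      ((∃ a, (tail a = x ∧ head a = y) ∨ (tail a = y ∧ head a = x)) ∧ x ∈ S ∧ y ∈ S)
      → y ∈ Si) :
    (∃ a, tail a ∉ S ∧ head a ∈ Si) ∧
    (∃ a, tail a ∈ Si ∧ head a ∉ S) ∧
    (∀ d ∉ S, ∃ (k : ℕ) (w : Fin (k + 1) → V) (e : Fin k → A),
      (∀ j : Fin k, tail (e j) = w j.castSucc ∧ head (e j) = w j.succ) ∧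
      w 0 = d ∧ w (Fin.last k) = d ∧
      (∃ j, w j ∈ Si) ∧ (∀ j, w j ∈ S → w j ∈ Si)) := by
  obtain ⟨d0, hd0⟩ := (Set.ne_univ_iff_exists_notMem S).mp hproper
  obtain ⟨x0, hx0⟩ := hSine
  -- entry arc
  have hentry : ∃ a, tail a ∉ S ∧ head a ∈ Si := by
    obtain ⟨es, hw, -⟩ := rtg_toWalk tail head (P := fun _ => True) (hstrong d0 x0)
      (fun u v ⟨a, h1, h2⟩ => ⟨a, h1, h2, trivial⟩)
    exact entry_arc tail head hSiS hSimax es d0 x0 hw hx0 (fun h => hd0 (hSiS h))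
  -- exit arc
  have hexit : ∃ a, tail a ∈ Si ∧ head a ∉ S := by
    obtain ⟨es, hw, -⟩ := rtg_toWalk tail head (P := fun _ => True) (hstrong x0 d0)
      (fun u v ⟨a, h1, h2⟩ => ⟨a, h1, h2, trivial⟩)
    exact exit_arc tail head hSiS hSimax es x0 d0 hw hd0 hx0
  refine ⟨hentry, hexit, ?_⟩
  intro d hd
  obtain ⟨a1, ha1t, ha1h⟩ := hentry
  -- walk from d to tail a1, staying outside S
  obtain ⟨es1, hw1, hP1⟩ := rtg_toWalk tail head (P := fun u => u ∉ S)
    (hVS d hd (tail a1) ha1t) (fun u v ⟨a, h1, h2, _, h4⟩ => ⟨a, h1, h2, h4⟩)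
  -- walk from head a1 out of S, staying in Si
  obtain ⟨es0, hw0, -⟩ := rtg_toWalk tail head (P := fun _ => True) (hstrong (head a1) d0)
    (fun u v ⟨a, h1, h2⟩ => ⟨a, h1, h2, trivial⟩)
  obtain ⟨fs, z, hwf, hz, hPf⟩ :=
    exit_walk tail head hSiS hSimax es0 (head a1) d0 hw0 hd0 ha1h
  -- walk from z back to d, staying outside S
  obtain ⟨es3, hw3, hP3⟩ := rtg_toWalk tail head (P := fun u => u ∉ S)
    (hVS z hz d hd) (fun u v ⟨a, h1, h2, _, h4⟩ => ⟨a, h1, h2, h4⟩)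
  set es : List A := es1 ++ a1 :: (fs ++ es3) with hes
  have hwalk : IsWalk tail head es d d :=
    isWalk_append tail head hw1 ⟨rfl, isWalk_append tail head hwf hw3⟩
  have hProp : ∀ u ∈ es.map head, u ∈ S → u ∈ Si := by
    intro u hu huS
    simp only [hes, List.map_append, List.map_cons, List.mem_append, List.mem_cons] at hu
    rcases hu with hu | hu | hu | hu
    · exact absurd huS (hP1 u hu)
    · exact hu ▸ ha1h
    · rcases hPf u hu with h | h
      · exact h
      · exact absurd huS h
    · exact absurd huS (hP3 u hu)
  have hq : head a1 ∈ es.map head := by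
    simp [hes]
  obtain ⟨w, e, he, h0, hl, hmem, hsurj⟩ := toFin tail head es d d hwalk
  refine ⟨es.length, w, e, he, h0, hl, ?_, ?_⟩
  · obtain ⟨j, hj⟩ := hsurj (head a1) hq
    exact ⟨j, hj ▸ ha1h⟩
  · intro j hjS
    rcases hmem j with h | h
    · exact absurd (h ▸ hjS) hd
    · exact hProp _ h hjS
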